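/- Let {f̂(n)}_{n≥0} ∈ GBV and {f̂(n) + f̂(−n)}_{n≥1} ∈ GBV. Then there exists C > 0 such that for all n ≥ 1 and all x ∈ [0, π]: |Σ_{k=1}^{n} f̂(n+k) sin kx| ≤ C·max_{1≤k≤n} k·(|f̂(n+k)| + |f̂(−n−k)|). -/

import Mathlib

open Filter Complex Real

noncomputable section

/-- `K(θ) = {z ∈ ℂ : |arg z| ≤ θ}`. -/
def Kset (θ : ℝ) : Set ℂ := {z : ℂ | |Complex.arg z| ≤ θ}

/-- The class GBV: `c_n ∈ K(θ₁)` for some `θ₁ ∈ [0, π/2)` and all `n ≥ 1`, and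
`Σ_{n=m}^{2m} |Δc_n| ≤ M · max_{m ≤ n < m+N₀} |c_n|` for all `m ≥ 1`. -/
def GBV (c : ℕ → ℂ) : Prop :=
  (∃ θ₁ : ℝ, 0 ≤ θ₁ ∧ θ₁ < Real.pi / 2 ∧ ∀ n, 1 ≤ n → c n ∈ Kset θ₁) ∧
  (∃ N₀ : ℕ, 1 ≤ N₀ ∧ ∃ M : ℝ, 0 < M ∧ ∀ m, 1 ≤ m →
    (∑ n ∈ Finset.Icc m (2 * m), ‖c n - c (n + 1)‖) ≤
      M * ⨆ n ∈ Finset.Ico m (m + N₀), ‖c n‖)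


lemma my_inner_sup (s : Finset ℕ) (f : ℕ → ℝ) (i : ℕ) :
    (⨆ (_ : i ∈ s), f i) = if i ∈ s then f i else 0 := by
  split_ifs with h
  · exact ciSup_pos h
  · haveI : IsEmpty (i ∈ s) := ⟨h⟩
    exact Real.iSup_of_isEmpty _

lemma my_le_isup (s : Finset ℕ) (f : ℕ → ℝ) (hf : ∀ i ∈ s, 0 ≤ f i) {k : ℕ}
    (hk : k ∈ s) : f k ≤ ⨆ i ∈ s, f i := by
  have hbdd : BddAbove (Set.range fun i => ⨆ (_ : i ∈ s), f i) := by
    refine ⟨∑ i ∈ s, f i, ?_⟩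
    rintro y ⟨i, rfl⟩
    show (⨆ (_ : i ∈ s), f i) ≤ ∑ i ∈ s, f i
    rw [my_inner_sup s f i]
    split_ifs with h
    · exact Finset.single_le_sum hf h
    · exact Finset.sum_nonneg hf
  have h2 := le_ciSup hbdd k
  rwa [ciSup_pos hk] at h2

lemma my_isup_le (s : Finset ℕ) (f : ℕ → ℝ) {B : ℝ} (hB : 0 ≤ B)
    (h : ∀ i ∈ s, f i ≤ B) : (⨆ i ∈ s, f i) ≤ B :=
  Real.iSup_le (fun i => Real.iSup_le (fun hi => h i hi) hB) hB

lemma abs_sin_le_self {t : ℝ} (ht : 0 ≤ t) : |Real.sin t| ≤ t := by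
  rw [abs_le]
  constructor
  · rcases le_or_gt 1 t with h | h
    · nlinarith [Real.neg_one_le_sin t]
    · have h2 : 0 ≤ Real.sin t :=
        Real.sin_nonneg_of_nonneg_of_le_pi ht (by nlinarith [Real.pi_gt_three])
      linarith
  · exact Real.sin_le ht

lemma sin_sum_identity (x : ℝ) (q L : ℕ) :
    2 * Real.sin (x/2) * ∑ i ∈ Finset.range L, Real.sin (((q : ℝ) + i) * x)
      = Real.cos (((q : ℝ) - 1/2) * x) - Real.cos (((q : ℝ) + L - 1/2) * x) := by
  induction L with
  | zero => simp
  | succ L ih =>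
      rw [Finset.sum_range_succ, mul_add, ih]
      have h := Real.cos_sub_cos (((q : ℝ) + L - 1/2) * x) (((q : ℝ) + L + 1/2) * x)
      have e1 : ((((q : ℝ) + L - 1/2) * x + ((q : ℝ) + L + 1/2) * x)) / 2
          = ((q : ℝ) + L) * x := by ring
      have e2 : ((((q : ℝ) + L - 1/2) * x - ((q : ℝ) + L + 1/2) * x)) / 2
          = -(x/2) := by ring
      rw [e1, e2, Real.sin_neg] at h
      have e3 : ((q : ℝ) + ((L : ℕ) + 1 : ℕ) - 1/2) * x = ((q : ℝ) + L + 1/2) * x := by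
        push_cast; ring
      rw [e3]
      linarith [h]

lemma sin_sum_bound (x : ℝ) (hx : 0 < x) (hx' : x ≤ Real.pi) (q L : ℕ) :
    |∑ i ∈ Finset.range L, Real.sin (((q : ℝ) + i) * x)| ≤ Real.pi / x := by
  have hs : 0 < Real.sin (x/2) :=
    Real.sin_pos_of_pos_of_lt_pi (by linarith) (by nlinarith [Real.pi_gt_three])
  have hsx : x / Real.pi ≤ Real.sin (x/2) := by
    have h := Real.mul_le_sin (x := x/2) (by linarith) (by linarith)
    have h2 : x / Real.pi = 2 / Real.pi * (x/2) := by ring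
    linarith [h2 ▸ h]
  have hid := sin_sum_identity x q L
  have hb : 2 * Real.sin (x/2) * |∑ i ∈ Finset.range L, Real.sin (((q : ℝ) + i) * x)| ≤ 2 := by
    have h1 : |2 * Real.sin (x/2) * ∑ i ∈ Finset.range L, Real.sin (((q : ℝ) + i) * x)| ≤ 2 := by
      rw [hid]
      calc |Real.cos (((q : ℝ) - 1/2) * x) - Real.cos (((q : ℝ) + L - 1/2) * x)|
          ≤ |Real.cos (((q : ℝ) - 1/2) * x)| + |Real.cos (((q : ℝ) + L - 1/2) * x)| :=
            abs_sub _ _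
        _ ≤ 1 + 1 := add_le_add (Real.abs_cos_le_one _) (Real.abs_cos_le_one _)
        _ = 2 := by norm_num
    rwa [abs_mul, abs_of_pos (by positivity : (0:ℝ) < 2 * Real.sin (x/2))] at h1
  have hπ : (0:ℝ) < Real.pi := Real.pi_pos
  have key : |∑ i ∈ Finset.range L, Real.sin (((q : ℝ) + i) * x)| ≤ 1 / Real.sin (x/2) := by
    rw [le_div_iff₀ hs]
    nlinarith [hb]
  calc |∑ i ∈ Finset.range L, Real.sin (((q : ℝ) + i) * x)|
      ≤ 1 / Real.sin (x/2) := key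
    _ ≤ 1 / (x / Real.pi) := by
        apply one_div_le_one_div_of_le (by positivity) hsx
    _ = Real.pi / x := by field_simp

lemma cabs_sub_le (x y : ℂ) : ‖x - y‖ ≤ ‖x‖ + ‖y‖ := by
  exact norm_sub_le x y

lemma abel_bound (a : ℕ → ℂ) (g : ℕ → ℝ) (L : ℕ) (D : ℝ)
    (hDb : ∀ m : ℕ, |∑ i ∈ Finset.range m, g i| ≤ D) :
    ‖∑ i ∈ Finset.range L, a i * (g i : ℂ)‖ ≤
      D * ((∑ i ∈ Finset.range (L-1), ‖a i - a (i+1)‖) + ‖a (L-1)‖) := by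
  have hD0 : 0 ≤ D := le_trans (abs_nonneg _) (hDb 0)
  have h := Finset.sum_range_by_parts a (fun i => ((g i : ℂ))) L
  simp only [smul_eq_mul] at h
  rw [h]
  have hG : ∀ m : ℕ, ‖∑ i ∈ Finset.range m, ((g i : ℂ))‖ ≤ D := by
    intro m
    rw [← Complex.ofReal_sum, Complex.norm_real, Real.norm_eq_abs]
    exact hDb m
  calc ‖a (L-1) * ∑ i ∈ Finset.range L, ((g i : ℂ)) -
          ∑ i ∈ Finset.range (L-1), (a (i+1) - a i) * ∑ j ∈ Finset.range (i+1), ((g j : ℂ))‖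
      ≤ ‖a (L-1) * ∑ i ∈ Finset.range L, ((g i : ℂ))‖ +
          ‖∑ i ∈ Finset.range (L-1), (a (i+1) - a i) * ∑ j ∈ Finset.range (i+1), ((g j : ℂ))‖ :=
        cabs_sub_le _ _
    _ ≤ ‖a (L-1)‖ * D +
          ∑ i ∈ Finset.range (L-1), ‖a i - a (i+1)‖ * D := by
        apply add_le_add
        · rw [norm_mul]
          exact mul_le_mul_of_nonneg_left (hG L) (norm_nonneg _)
        · refine le_trans (norm_sum_le _ _) (Finset.sum_le_sum ?_)
          intro i _
          rw [norm_mul, norm_sub_rev (a (i+1)) (a i)]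
          exact mul_le_mul_of_nonneg_left (hG (i+1)) (norm_nonneg _)
    _ = D * ((∑ i ∈ Finset.range (L-1), ‖a i - a (i+1)‖) + ‖a (L-1)‖) := by
        rw [← Finset.sum_mul]; ring

set_option maxHeartbeats 1000000 in
/-- Lemma 6 (first estimate): under the GBV hypotheses, uniformly for `x ∈ [0, π]`,
`|Σ_{k=1}^{n} f̂(n+k) sin kx| = O(max_{1≤k≤n} k(|f̂(n+k)| + |f̂(−n−k)|))`. -/
theorem stmt_8 (fhat : ℤ → ℂ)
    (h1 : GBV (fun n : ℕ => fhat (n : ℤ)))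
    (h2 : GBV (fun n : ℕ => fhat (n : ℤ) + fhat (-(n : ℤ)))) :
    ∃ C : ℝ, 0 < C ∧ ∀ n : ℕ, 1 ≤ n → ∀ x ∈ Set.Icc (0 : ℝ) Real.pi,
      ‖∑ k ∈ Finset.Icc 1 n,
          fhat ((n : ℤ) + (k : ℤ)) * (Real.sin (k * x) : ℂ)‖ ≤
        C * ⨆ k ∈ Finset.Icc 1 n,
          (k : ℝ) * (‖fhat ((n : ℤ) + (k : ℤ))‖ +
            ‖fhat (-(n : ℤ) - (k : ℤ))‖) := by
  clear h2
  unfold GBV at h1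
  obtain ⟨-, N₀, hN₀, M, hM0, hM⟩ := h1
  set c : ℕ → ℂ := fun m : ℕ => fhat (m : ℤ) with hc
  have hπ : (0:ℝ) < Real.pi := Real.pi_pos
  have hN₀R : (0:ℝ) ≤ (N₀:ℝ) := Nat.cast_nonneg _
  refine ⟨2*Real.pi + 2*Real.pi*N₀ + N₀ + M + 2, by nlinarith, ?_⟩
  intro n hn x hx
  obtain ⟨hx0, hxpi⟩ := hx
  set T := ⨆ k ∈ Finset.Icc 1 n,
      (k : ℝ) * (‖fhat ((n : ℤ) + (k : ℤ))‖ +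
        ‖fhat (-(n : ℤ) - (k : ℤ))‖) with hT
  have hT0 : 0 ≤ T := by
    rw [hT]
    exact Real.iSup_nonneg fun k => Real.iSup_nonneg fun _ => by positivity
  have hkey : ∀ k, 1 ≤ k → k ≤ n → (k:ℝ) * ‖c (n+k)‖ ≤ T := by
    intro k hk1 hkn
    have hck : c (n+k) = fhat ((n:ℤ) + (k:ℤ)) := by
      simp only [hc]; norm_cast
    rw [hck, hT]
    have h3 := my_le_isup (Finset.Icc 1 n)
        (fun k => (k : ℝ) * (‖fhat ((n : ℤ) + (k : ℤ))‖ +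
          ‖fhat (-(n : ℤ) - (k : ℤ))‖))
        (fun i _ => by positivity) (Finset.mem_Icc.mpr ⟨hk1, hkn⟩)
    have h3' : (k : ℝ) * (‖fhat ((n : ℤ) + (k : ℤ))‖ +
        ‖fhat (-(n : ℤ) - (k : ℤ))‖) ≤
        ⨆ k ∈ Finset.Icc 1 n, (k : ℝ) * (‖fhat ((n : ℤ) + (k : ℤ))‖ +
          ‖fhat (-(n : ℤ) - (k : ℤ))‖) := h3
    refine le_trans ?_ h3'
    have hb0 : (0:ℝ) ≤ ‖fhat (-(n : ℤ) - (k : ℤ))‖ := norm_nonneg _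
    have hk0 : (0:ℝ) ≤ (k:ℝ) := Nat.cast_nonneg _
    nlinarith [norm_nonneg (fhat ((n:ℤ)+(k:ℤ)))]
  have hsum : (∑ k ∈ Finset.Icc 1 n, fhat ((n : ℤ) + (k : ℤ)) * (Real.sin ((k:ℝ) * x) : ℂ))
      = ∑ k ∈ Finset.Icc 1 n, c (n+k) * (Real.sin ((k:ℝ) * x) : ℂ) := by
    refine Finset.sum_congr rfl fun k _ => ?_
    have hck : c (n+k) = fhat ((n:ℤ) + (k:ℤ)) := by simp only [hc]; norm_cast
    rw [hck]
  rcases eq_or_lt_of_le hx0 with hx0' | hxp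
  · subst hx0'
    simp only [mul_zero, Real.sin_zero, Complex.ofReal_zero, Finset.sum_const_zero, norm_zero]
    have : (0:ℝ) ≤ (2*Real.pi + 2*Real.pi*N₀ + N₀ + M + 2) := by nlinarith
    exact mul_nonneg this hT0
  -- main case 0 < x
  obtain ⟨N, hNpos, hpiN, hNx⟩ :
      ∃ N : ℕ, 0 < N ∧ Real.pi / x ≤ (N:ℝ) ∧ (N:ℝ) * x ≤ 2 * Real.pi := by
    refine ⟨⌈Real.pi / x⌉₊, Nat.ceil_pos.mpr (by positivity), Nat.le_ceil _, ?_⟩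
    have h := Nat.ceil_lt_add_one (by positivity : (0:ℝ) ≤ Real.pi / x)
    have h3 : (Real.pi / x) * x = Real.pi := div_mul_cancel₀ _ (ne_of_gt hxp)
    nlinarith
  have hNR : (0:ℝ) < (N:ℝ) := by exact_mod_cast hNpos
  set m' := min n (N + 2*N₀) with hm'def
  have hm'n : m' ≤ n := min_le_left _ _
  have hm'le : m' ≤ N + 2*N₀ := min_le_right _ _
  have hm'1 : 1 ≤ m' := le_min hn (by omega)
  have hIcc0 : Finset.Icc 1 n = Finset.Ioc 0 n := by
    ext j; simp only [Finset.mem_Icc, Finset.mem_Ioc]; omega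
  have hsplit := Finset.sum_Ioc_consecutive
      (fun k => c (n+k) * (Real.sin ((k:ℝ) * x) : ℂ)) (Nat.zero_le m') hm'n
  -- head bound
  have hhead : ‖∑ k ∈ Finset.Ioc 0 m', c (n+k) * (Real.sin ((k:ℝ) * x) : ℂ)‖
      ≤ (2*Real.pi + 2*Real.pi*N₀) * T := by
    have hterm : ∀ k ∈ Finset.Ioc 0 m',
        ‖c (n+k) * (Real.sin ((k:ℝ) * x) : ℂ)‖ ≤ T * x := by
      intro k hk
      obtain ⟨hk0, hkm⟩ := Finset.mem_Ioc.mp hk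
      rw [norm_mul, Complex.norm_real, Real.norm_eq_abs]
      have hs : |Real.sin ((k:ℝ) * x)| ≤ (k:ℝ) * x :=
        abs_sin_le_self (by positivity)
      have hcnn : (0:ℝ) ≤ ‖c (n+k)‖ := norm_nonneg _
      have hkk := hkey k hk0 (le_trans hkm hm'n)
      nlinarith [hs, hcnn, hkk, hxp]
    calc ‖∑ k ∈ Finset.Ioc 0 m', c (n+k) * (Real.sin ((k:ℝ) * x) : ℂ)‖
        ≤ ∑ k ∈ Finset.Ioc 0 m', ‖c (n+k) * (Real.sin ((k:ℝ) * x) : ℂ)‖ :=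
          norm_sum_le _ _
      _ ≤ ∑ _k ∈ Finset.Ioc 0 m', T * x := Finset.sum_le_sum hterm
      _ = (m' : ℝ) * (T * x) := by
          rw [Finset.sum_const, Nat.card_Ioc, nsmul_eq_mul]
          norm_num
      _ ≤ (2*Real.pi + 2*Real.pi*N₀) * T := by
          have h1 : (m' : ℝ) ≤ (N:ℝ) + 2*(N₀:ℝ) := by exact_mod_cast hm'le
          have h2 : (m' : ℝ) * x ≤ 2*Real.pi + 2*(N₀:ℝ)*Real.pi := by
            have h4 : (0:ℝ) ≤ (m':ℝ) := Nat.cast_nonneg _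
            nlinarith [hNx, hxpi, hxp]
          nlinarith [mul_le_mul_of_nonneg_right h2 hT0]
  -- tail bound
  have htail : ‖∑ k ∈ Finset.Ioc m' n, c (n+k) * (Real.sin ((k:ℝ) * x) : ℂ)‖
      ≤ ((N₀:ℝ) + M + 1) * T := by
    have hRnn : (0:ℝ) ≤ ((N₀:ℝ) + M + 1) * T := by nlinarith
    rcases le_or_gt n (N + 2*N₀) with hc1 | hc1
    · have : m' = n := min_eq_left ?_
      · rw [this]
        simp only [Finset.Ioc_self, Finset.sum_empty, norm_zero]
        exact hRnn
      · omega
    have hm'eq : m' = N + 2*N₀ := min_eq_right (by omega)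
    rcases lt_or_ge n (N + 3*N₀) with hc2 | hc2
    · -- short tail: at most N₀ terms, each ≤ T
      have hterm : ∀ k ∈ Finset.Ioc m' n,
          ‖c (n+k) * (Real.sin ((k:ℝ) * x) : ℂ)‖ ≤ T := by
        intro k hk
        obtain ⟨hk0, hkn⟩ := Finset.mem_Ioc.mp hk
        rw [norm_mul, Complex.norm_real, Real.norm_eq_abs]
        have hs : |Real.sin ((k:ℝ) * x)| ≤ 1 := Real.abs_sin_le_one _
        have hcnn : (0:ℝ) ≤ ‖c (n+k)‖ := norm_nonneg _
        have hkk := hkey k (by omega) hkn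
        have hk1 : (1:ℝ) ≤ (k:ℝ) := by exact_mod_cast Nat.one_le_iff_ne_zero.mpr (by omega)
        nlinarith
      calc ‖∑ k ∈ Finset.Ioc m' n, c (n+k) * (Real.sin ((k:ℝ) * x) : ℂ)‖
          ≤ ∑ k ∈ Finset.Ioc m' n, ‖c (n+k) * (Real.sin ((k:ℝ) * x) : ℂ)‖ :=
            norm_sum_le _ _
        _ ≤ ∑ _k ∈ Finset.Ioc m' n, T := Finset.sum_le_sum hterm
        _ = ((n - m' : ℕ) : ℝ) * T := by
            rw [Finset.sum_const, Nat.card_Ioc, nsmul_eq_mul]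
        _ ≤ ((N₀:ℝ) + M + 1) * T := by
            have h5 : ((n - m' : ℕ) : ℝ) ≤ (N₀:ℝ) := by
              have : n - m' ≤ N₀ := by omega
              exact_mod_cast this
            nlinarith
    · -- long tail: Abel summation
      set q := m' + 1 with hqdef
      set L := n + 1 - q with hLdef
      have hqn : q ≤ n := by omega
      have htail_eq : (∑ k ∈ Finset.Ioc m' n, c (n+k) * (Real.sin ((k:ℝ) * x) : ℂ))
          = ∑ i ∈ Finset.range L, c (n+q+i) * (Real.sin (((q:ℝ) + (i:ℝ)) * x) : ℂ) := by
        have e1 : Finset.Ioc m' n = Finset.Ico q (n+1) := by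
          ext j; simp only [Finset.mem_Ioc, Finset.mem_Ico]; omega
        rw [e1, Finset.sum_Ico_eq_sum_range]
        refine Finset.sum_congr rfl fun i _ => ?_
        have e2 : n + (q + i) = n + q + i := by omega
        have e3 : ((q + i : ℕ) : ℝ) = (q:ℝ) + (i:ℝ) := by push_cast; ring
        rw [e2, e3]
      have hDb : ∀ m : ℕ, |∑ i ∈ Finset.range m, Real.sin (((q:ℝ) + (i:ℝ)) * x)| ≤ Real.pi / x :=
        fun m => sin_sum_bound x hxp hxpi q m
      have habel := abel_bound (fun i => c (n+q+i)) (fun i => Real.sin (((q:ℝ) + (i:ℝ)) * x))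
          L (Real.pi / x) hDb
      have hTN0 : (0:ℝ) ≤ T / N := div_nonneg hT0 (le_of_lt hNR)
      -- variation bound
      have hS1 : (∑ i ∈ Finset.range (L-1), ‖c (n+q+i) - c (n+q+i+1)‖)
          ≤ M * (T / N) := by
        have e1 : (∑ i ∈ Finset.range (L-1), ‖c (n+q+i) - c (n+q+i+1)‖)
            = ∑ j ∈ Finset.Ico (n+q) (n+q+(L-1)), ‖c j - c (j+1)‖ := by
          rw [Finset.sum_Ico_eq_sum_range]
          have e2 : n + q + (L-1) - (n+q) = L - 1 := by omega
          rw [e2]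
        rw [e1]
        have hsub : Finset.Ico (n+q) (n+q+(L-1)) ⊆ Finset.Icc (n+q) (2*(n+q)) := by
          intro j hj
          simp only [Finset.mem_Ico] at hj
          simp only [Finset.mem_Icc]
          omega
        calc (∑ j ∈ Finset.Ico (n+q) (n+q+(L-1)), ‖c j - c (j+1)‖)
            ≤ ∑ j ∈ Finset.Icc (n+q) (2*(n+q)), ‖c j - c (j+1)‖ :=
              Finset.sum_le_sum_of_subset_of_nonneg hsub
                (fun i _ _ => norm_nonneg _)
          _ ≤ M * ⨆ j ∈ Finset.Ico (n+q) (n+q+N₀), ‖c j‖ := hM (n+q) (by omega)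
          _ ≤ M * (T / N) := by
              refine mul_le_mul_of_nonneg_left ?_ (le_of_lt hM0)
              refine my_isup_le _ _ hTN0 ?_
              intro j hj
              simp only [Finset.mem_Ico] at hj
              have hj' : j = n + (j - n) := by omega
              have h1k : 1 ≤ j - n := by omega
              have hkn : j - n ≤ n := by omega
              have hNk : N ≤ j - n := by omega
              have hkk := hkey (j-n) h1k hkn
              rw [hj', le_div_iff₀ hNR]
              have hcnn : (0:ℝ) ≤ ‖c (n + (j-n))‖ := norm_nonneg _
              have hNk' : (N:ℝ) ≤ ((j-n : ℕ):ℝ) := by exact_mod_cast hNk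
              nlinarith
      have hlast : ‖c (n+q+(L-1))‖ ≤ T / N := by
        have e : n+q+(L-1) = n+n := by omega
        rw [e]
        have hkk := hkey n hn le_rfl
        have hNn : (N:ℝ) ≤ (n:ℝ) := by exact_mod_cast (by omega : N ≤ n)
        rw [le_div_iff₀ hNR]
        have hcnn : (0:ℝ) ≤ ‖c (n+n)‖ := norm_nonneg _
        nlinarith
      rw [htail_eq]
      have hpx0 : (0:ℝ) ≤ Real.pi / x := by positivity
      calc ‖∑ i ∈ Finset.range L, c (n+q+i) * (Real.sin (((q:ℝ) + (i:ℝ)) * x) : ℂ)‖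
          ≤ (Real.pi / x) * ((∑ i ∈ Finset.range (L-1), ‖c (n+q+i) - c (n+q+i+1)‖)
              + ‖c (n+q+(L-1))‖) := habel
        _ ≤ (Real.pi / x) * ((M + 1) * (T / N)) := by
            refine mul_le_mul_of_nonneg_left ?_ hpx0
            nlinarith [hS1, hlast]
        _ ≤ (N:ℝ) * ((M + 1) * (T / N)) := by
            refine mul_le_mul_of_nonneg_right hpiN ?_
            nlinarith
        _ = (M + 1) * T := by field_simp
        _ ≤ ((N₀:ℝ) + M + 1) * T := by nlinarith
  -- combine
  have hfinal : ‖∑ k ∈ Finset.Icc 1 n, fhat ((n : ℤ) + (k : ℤ)) * (Real.sin ((k:ℝ) * x) : ℂ)‖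
      ≤ (2*Real.pi + 2*Real.pi*N₀ + N₀ + M + 2) * T := by
    rw [hsum, hIcc0, ← hsplit]
    calc ‖(∑ k ∈ Finset.Ioc 0 m', c (n+k) * (Real.sin ((k:ℝ) * x) : ℂ))
            + ∑ k ∈ Finset.Ioc m' n, c (n+k) * (Real.sin ((k:ℝ) * x) : ℂ)‖
        ≤ ‖∑ k ∈ Finset.Ioc 0 m', c (n+k) * (Real.sin ((k:ℝ) * x) : ℂ)‖
            + ‖∑ k ∈ Finset.Ioc m' n, c (n+k) * (Real.sin ((k:ℝ) * x) : ℂ)‖ :=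
          norm_add_le _ _
      _ ≤ (2*Real.pi + 2*Real.pi*N₀) * T + ((N₀:ℝ) + M + 1) * T := add_le_add hhead htail
      _ ≤ (2*Real.pi + 2*Real.pi*N₀ + N₀ + M + 2) * T := by nlinarith
  exact hfinal
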